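/- With notation as above (ψ > 0, a,b,c > 0 with a+b+c=1, f and h as defined on 𝒟), the Hessian of f + h at (x,y) ∈ 𝒟 equals [[−T − ψ/(x(ψ+x)), T], [T, −S − T]], where S = 1/((2−y)(1−y)) + 1/(y(1+y)) and T = a/((a+b−x+y)(b−x+y)) + c/((c+x−y)(x−y)). Moreover S ≥ 1 and T ≥ 0 on 𝒟. -/

import Mathlib

open Real

/-- The entropy-type function `h(x,y)` on the domain `𝒟`. -/
noncomputable def hFn (a b c x y : ℝ) : ℝ :=
  (2 - y) * Real.log (2 - y) - (1 - y) * Real.log (1 - y) + (1 + y) * Real.log (1 + y) -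
    y * Real.log y + (c + x - y) * Real.log (c + x - y) - c * Real.log c -
    (x - y) * Real.log (x - y) + (a + b + y - x) * Real.log (a + b + y - x) -
    a * Real.log a - (b + y - x) * Real.log (b + y - x)

/-- The function `f(x) = (ψ+x)log(ψ+x) − ψ log ψ − x log x`. -/
noncomputable def fFn (ψ x : ℝ) : ℝ :=
  (ψ + x) * Real.log (ψ + x) - ψ * Real.log ψ - x * Real.log x

/-- `g = f + h`. -/
noncomputable def gFn (a b c ψ x y : ℝ) : ℝ := fFn ψ x + hFn a b c x y

/-- Membership in the domain `𝒟 = {(x,y) : 0 < x, 0 < y, x < 1+b, x−b < y < min(x,1)}`. -/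
def memD (b x y : ℝ) : Prop :=
  0 < x ∧ 0 < y ∧ x < 1 + b ∧ x - b < y ∧ y < x ∧ y < 1

/-- The Hessian matrix of `g = f + h` at `(x, y)`, with entries given by iterated `deriv`s. -/
noncomputable def hessG (a b c ψ x y : ℝ) : Matrix (Fin 2) (Fin 2) ℝ :=
  !![deriv (fun t => deriv (fun s => gFn a b c ψ s y) t) x,
     deriv (fun t => deriv (fun s => gFn a b c ψ s t) x) y;
     deriv (fun t => deriv (fun s => gFn a b c ψ t s) y) x,
     deriv (fun t => deriv (fun s => gFn a b c ψ x s) t) y]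

/-- Derivative of `g` in the first variable. -/
lemma gx_hasDeriv (a b c ψ y t : ℝ) (h1 : ψ + t ≠ 0) (h2 : t ≠ 0) (h3 : c + t - y ≠ 0)
    (h4 : t - y ≠ 0) (h5 : a + b + y - t ≠ 0) (h6 : b + y - t ≠ 0) :
    HasDerivAt (fun s => gFn a b c ψ s y)
      (Real.log (ψ + t) - Real.log t + Real.log (c + t - y) - Real.log (t - y)
        - Real.log (a + b + y - t) + Real.log (b + y - t)) t := by
  have A : HasDerivAt (fun s : ℝ => (ψ + s) * Real.log (ψ + s)) (Real.log (ψ + t) + 1) t := by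
    simpa [Function.comp_def] using (Real.hasDerivAt_mul_log h1).comp t ((hasDerivAt_id t).const_add ψ)
  have B : HasDerivAt (fun s : ℝ => s * Real.log s) (Real.log t + 1) t :=
    Real.hasDerivAt_mul_log h2
  have C : HasDerivAt (fun s : ℝ => (c + s - y) * Real.log (c + s - y))
      (Real.log (c + t - y) + 1) t := by
    simpa [Function.comp_def] using (Real.hasDerivAt_mul_log h3).comp t
      (((hasDerivAt_id t).const_add c).sub_const y)
  have D : HasDerivAt (fun s : ℝ => (s - y) * Real.log (s - y)) (Real.log (t - y) + 1) t := by
    simpa [Function.comp_def] using (Real.hasDerivAt_mul_log h4).comp t ((hasDerivAt_id t).sub_const y)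
  have E : HasDerivAt (fun s : ℝ => (a + b + y - s) * Real.log (a + b + y - s))
      (-(Real.log (a + b + y - t) + 1)) t := by
    simpa [Function.comp_def] using (Real.hasDerivAt_mul_log h5).comp t ((hasDerivAt_id t).const_sub (a + b + y))
  have F : HasDerivAt (fun s : ℝ => (b + y - s) * Real.log (b + y - s))
      (-(Real.log (b + y - t) + 1)) t := by
    simpa [Function.comp_def] using (Real.hasDerivAt_mul_log h6).comp t ((hasDerivAt_id t).const_sub (b + y))
  have H := ((A.sub_const (ψ * Real.log ψ)).sub B).add
    ((((((C.const_add ((2 - y) * Real.log (2 - y) - (1 - y) * Real.log (1 - y)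
        + (1 + y) * Real.log (1 + y) - y * Real.log y)).sub_const
        (c * Real.log c)).sub D).add E).sub_const (a * Real.log a)).sub F)
  have hfun : (fun s => gFn a b c ψ s y) = (fun s =>
      (ψ + s) * Real.log (ψ + s) - ψ * Real.log ψ - s * Real.log s +
      ((2 - y) * Real.log (2 - y) - (1 - y) * Real.log (1 - y)
        + (1 + y) * Real.log (1 + y) - y * Real.log y +
        (c + s - y) * Real.log (c + s - y) - c * Real.log c -
        (s - y) * Real.log (s - y) + (a + b + y - s) * Real.log (a + b + y - s) -
        a * Real.log a - (b + y - s) * Real.log (b + y - s))) := by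
    funext s; simp only [gFn, fFn, hFn]
  rw [hfun]
  exact H.congr_deriv (by ring)

/-- Derivative of `g` in the second variable. -/
lemma gy_hasDeriv (a b c ψ x t : ℝ) (h1 : 2 - t ≠ 0) (h2 : 1 - t ≠ 0) (h3 : 1 + t ≠ 0)
    (h4 : t ≠ 0) (h5 : c + x - t ≠ 0) (h6 : x - t ≠ 0) (h7 : a + b + t - x ≠ 0)
    (h8 : b + t - x ≠ 0) :
    HasDerivAt (fun s => gFn a b c ψ x s)
      (-Real.log (2 - t) + Real.log (1 - t) + Real.log (1 + t) - Real.log t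
        - Real.log (c + x - t) + Real.log (x - t) + Real.log (a + b + t - x)
        - Real.log (b + t - x)) t := by
  have A : HasDerivAt (fun s : ℝ => (2 - s) * Real.log (2 - s)) (-(Real.log (2 - t) + 1)) t := by
    simpa [Function.comp_def] using (Real.hasDerivAt_mul_log h1).comp t ((hasDerivAt_id t).const_sub 2)
  have B : HasDerivAt (fun s : ℝ => (1 - s) * Real.log (1 - s)) (-(Real.log (1 - t) + 1)) t := by
    simpa [Function.comp_def] using (Real.hasDerivAt_mul_log h2).comp t ((hasDerivAt_id t).const_sub 1)
  have C : HasDerivAt (fun s : ℝ => (1 + s) * Real.log (1 + s)) (Real.log (1 + t) + 1) t := by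
    simpa [Function.comp_def] using (Real.hasDerivAt_mul_log h3).comp t ((hasDerivAt_id t).const_add 1)
  have D : HasDerivAt (fun s : ℝ => s * Real.log s) (Real.log t + 1) t :=
    Real.hasDerivAt_mul_log h4
  have E : HasDerivAt (fun s : ℝ => (c + x - s) * Real.log (c + x - s))
      (-(Real.log (c + x - t) + 1)) t := by
    simpa [Function.comp_def] using (Real.hasDerivAt_mul_log h5).comp t ((hasDerivAt_id t).const_sub (c + x))
  have F : HasDerivAt (fun s : ℝ => (x - s) * Real.log (x - s)) (-(Real.log (x - t) + 1)) t := by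
    simpa [Function.comp_def] using (Real.hasDerivAt_mul_log h6).comp t ((hasDerivAt_id t).const_sub x)
  have G : HasDerivAt (fun s : ℝ => (a + b + s - x) * Real.log (a + b + s - x))
      (Real.log (a + b + t - x) + 1) t := by
    simpa [Function.comp_def] using (Real.hasDerivAt_mul_log h7).comp t
      (((hasDerivAt_id t).const_add (a + b)).sub_const x)
  have I : HasDerivAt (fun s : ℝ => (b + s - x) * Real.log (b + s - x))
      (Real.log (b + t - x) + 1) t := by
    simpa [Function.comp_def] using (Real.hasDerivAt_mul_log h8).comp t
      (((hasDerivAt_id t).const_add b).sub_const x)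
  have H := (((((((((A.sub B).add C).sub D).add E).sub_const (c * Real.log c)).sub F).add
      G).sub_const (a * Real.log a)).sub I).const_add
      ((ψ + x) * Real.log (ψ + x) - ψ * Real.log ψ - x * Real.log x)
  have hfun : (fun s => gFn a b c ψ x s) = (fun s =>
      (ψ + x) * Real.log (ψ + x) - ψ * Real.log ψ - x * Real.log x +
      ((2 - s) * Real.log (2 - s) - (1 - s) * Real.log (1 - s)
        + (1 + s) * Real.log (1 + s) - s * Real.log s +
        (c + x - s) * Real.log (c + x - s) - c * Real.log c -
        (x - s) * Real.log (x - s) + (a + b + s - x) * Real.log (a + b + s - x) -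
        a * Real.log a - (b + s - x) * Real.log (b + s - x))) := by
    funext s; simp only [gFn, fFn, hFn]
  rw [hfun]
  exact H.congr_deriv (by ring)


/-- Helper: difference of inverses. -/
lemma inv_sub_inv'' (p q r : ℝ) (hp : p ≠ 0) (hq : q ≠ 0) (h : p - q = r) :
    p⁻¹ - q⁻¹ = -(r / (p * q)) := by
  subst h; field_simp; ring

set_option maxHeartbeats 2000000 in
/-- The Hessian of `f + h` at `(x,y) ∈ 𝒟` equals
`[[−T − ψ/(x(ψ+x)), T], [T, −S − T]]` with
`S = 1/((2−y)(1−y)) + 1/(y(1+y))` and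
`T = a/((a+b−x+y)(b−x+y)) + c/((c+x−y)(x−y))`; moreover `S ≥ 1` and `T ≥ 0`. -/
theorem hessian_explicit (a b c ψ : ℝ) (ha : 0 < a) (hb : 0 < b) (hc : 0 < c)
    (habc : a + b + c = 1) (hψ : 0 < ψ) (x y : ℝ) (hxy : memD b x y)
    (S T : ℝ)
    (hS : S = 1 / ((2 - y) * (1 - y)) + 1 / (y * (1 + y)))
    (hT : T = a / ((a + b - x + y) * (b - x + y)) + c / ((c + x - y) * (x - y))) :
    hessG a b c ψ x y = !![-T - ψ / (x * (ψ + x)), T; T, -S - T] ∧ 1 ≤ S ∧ 0 ≤ T := by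
  obtain ⟨hx0, hy0, hx1b, hbxy, hyx, hy1⟩ := hxy
  have pψx : (0:ℝ) < ψ + x := by linarith
  have pxy : (0:ℝ) < x - y := by linarith
  have pcxy : (0:ℝ) < c + x - y := by linarith
  have pbyx : (0:ℝ) < b + y - x := by linarith
  have pabyx : (0:ℝ) < a + b + y - x := by linarith
  have p2y : (0:ℝ) < 2 - y := by linarith
  have p1y : (0:ℝ) < 1 - y := by linarith
  have p1py : (0:ℝ) < 1 + y := by linarith
  -- nonzero versions
  have nψx := pψx.ne'
  have nx := hx0.ne'
  have nxy := pxy.ne'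
  have ncxy := pcxy.ne'
  have nbyx := pbyx.ne'
  have nabyx := pabyx.ne'
  have n2y := p2y.ne'
  have n1y := p1y.ne'
  have n1py := p1py.ne'
  have ny := hy0.ne'
  -- entry (0,0)
  have e11 : deriv (fun t => deriv (fun s => gFn a b c ψ s y) t) x
      = -T - ψ / (x * (ψ + x)) := by
    have hev : (fun t => deriv (fun s => gFn a b c ψ s y) t) =ᶠ[nhds x]
        (fun t => Real.log (ψ + t) - Real.log t + Real.log (c + t - y) - Real.log (t - y)
          - Real.log (a + b + y - t) + Real.log (b + y - t)) := by
      filter_upwards [eventually_gt_nhds (show -ψ < x by linarith),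
        eventually_gt_nhds hx0, eventually_gt_nhds (show y - c < x by linarith),
        eventually_gt_nhds hyx, eventually_lt_nhds (show x < a + b + y by linarith),
        eventually_lt_nhds (show x < b + y by linarith)] with t h1 h2 h3 h4 h5 h6
      exact (gx_hasDeriv a b c ψ y t (by linarith) (by linarith) (by linarith)
        (by linarith) (by linarith) (by linarith)).deriv
    rw [hev.deriv_eq]
    have L1 : HasDerivAt (fun t : ℝ => Real.log (ψ + t)) (ψ + x)⁻¹ x := by
      simpa [Function.comp_def] using (Real.hasDerivAt_log nψx).comp x ((hasDerivAt_id x).const_add ψ)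
    have L2 : HasDerivAt (fun t : ℝ => Real.log t) x⁻¹ x := Real.hasDerivAt_log nx
    have L3 : HasDerivAt (fun t : ℝ => Real.log (c + t - y)) (c + x - y)⁻¹ x := by
      simpa [Function.comp_def] using (Real.hasDerivAt_log ncxy).comp x (((hasDerivAt_id x).const_add c).sub_const y)
    have L4 : HasDerivAt (fun t : ℝ => Real.log (t - y)) (x - y)⁻¹ x := by
      simpa [Function.comp_def] using (Real.hasDerivAt_log nxy).comp x ((hasDerivAt_id x).sub_const y)
    have L5 : HasDerivAt (fun t : ℝ => Real.log (a + b + y - t)) (-(a + b + y - x)⁻¹) x := by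
      simpa [Function.comp_def] using (Real.hasDerivAt_log nabyx).comp x ((hasDerivAt_id x).const_sub (a + b + y))
    have L6 : HasDerivAt (fun t : ℝ => Real.log (b + y - t)) (-(b + y - x)⁻¹) x := by
      simpa [Function.comp_def] using (Real.hasDerivAt_log nbyx).comp x ((hasDerivAt_id x).const_sub (b + y))
    erw [(((((L1.sub L2).add L3).sub L4).sub L5).add L6).deriv]
    rw [hT]
    have A' : (ψ + x)⁻¹ - x⁻¹ = -(ψ / ((ψ + x) * x)) :=
      inv_sub_inv'' _ _ _ nψx nx (by ring)
    rw [show (ψ + x) * x = x * (ψ + x) by ring] at A'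
    have B' : (c + x - y)⁻¹ - (x - y)⁻¹ = -(c / ((c + x - y) * (x - y))) :=
      inv_sub_inv'' _ _ _ ncxy nxy (by ring)
    have C' : (a + b + y - x)⁻¹ - (b + y - x)⁻¹
        = -(a / ((a + b + y - x) * (b + y - x))) :=
      inv_sub_inv'' _ _ _ nabyx nbyx (by ring)
    rw [show (a + b + y - x) * (b + y - x) = (a + b - x + y) * (b - x + y) by ring] at C'
    linarith [A', B', C']
  -- entry (0,1)
  have e12 : deriv (fun t => deriv (fun s => gFn a b c ψ s t) x) y = T := by
    have hev : (fun t => deriv (fun s => gFn a b c ψ s t) x) =ᶠ[nhds y]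
        (fun t => Real.log (ψ + x) - Real.log x + Real.log (c + x - t) - Real.log (x - t)
          - Real.log (a + b + t - x) + Real.log (b + t - x)) := by
      filter_upwards [eventually_lt_nhds (show y < c + x by linarith),
        eventually_lt_nhds hyx, eventually_gt_nhds (show x - a - b < y by linarith),
        eventually_gt_nhds hbxy] with t h1 h2 h3 h4
      have := (gx_hasDeriv a b c ψ t x nψx nx (by linarith) (by linarith)
        (by linarith) (by linarith)).deriv
      exact this
    rw [hev.deriv_eq]
    have L3 : HasDerivAt (fun t : ℝ => Real.log (c + x - t)) (-(c + x - y)⁻¹) y := by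
      simpa [Function.comp_def] using (Real.hasDerivAt_log ncxy).comp y ((hasDerivAt_id y).const_sub (c + x))
    have L4 : HasDerivAt (fun t : ℝ => Real.log (x - t)) (-(x - y)⁻¹) y := by
      simpa [Function.comp_def] using (Real.hasDerivAt_log nxy).comp y ((hasDerivAt_id y).const_sub x)
    have L5 : HasDerivAt (fun t : ℝ => Real.log (a + b + t - x)) (a + b + y - x)⁻¹ y := by
      simpa [Function.comp_def] using (Real.hasDerivAt_log nabyx).comp y
        (((hasDerivAt_id y).const_add (a + b)).sub_const x)
    have L6 : HasDerivAt (fun t : ℝ => Real.log (b + t - x)) (b + y - x)⁻¹ y := by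
      simpa [Function.comp_def] using (Real.hasDerivAt_log nbyx).comp y
        (((hasDerivAt_id y).const_add b).sub_const x)
    erw [((((L3.const_add (Real.log (ψ + x) - Real.log x)).sub L4).sub L5).add L6).deriv]
    rw [hT]
    have B' : (c + x - y)⁻¹ - (x - y)⁻¹ = -(c / ((c + x - y) * (x - y))) :=
      inv_sub_inv'' _ _ _ ncxy nxy (by ring)
    have C' : (a + b + y - x)⁻¹ - (b + y - x)⁻¹
        = -(a / ((a + b + y - x) * (b + y - x))) :=
      inv_sub_inv'' _ _ _ nabyx nbyx (by ring)
    rw [show (a + b + y - x) * (b + y - x) = (a + b - x + y) * (b - x + y) by ring] at C'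
    linarith [B', C']
  -- entry (1,0)
  have e21 : deriv (fun t => deriv (fun s => gFn a b c ψ t s) y) x = T := by
    have hev : (fun t => deriv (fun s => gFn a b c ψ t s) y) =ᶠ[nhds x]
        (fun t => -Real.log (2 - y) + Real.log (1 - y) + Real.log (1 + y) - Real.log y
          - Real.log (c + t - y) + Real.log (t - y) + Real.log (a + b + y - t)
          - Real.log (b + y - t)) := by
      filter_upwards [eventually_gt_nhds (show y - c < x by linarith),
        eventually_gt_nhds hyx, eventually_lt_nhds (show x < a + b + y by linarith),
        eventually_lt_nhds (show x < b + y by linarith)] with t h1 h2 h3 h4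
      exact (gy_hasDeriv a b c ψ t y n2y n1y n1py ny (by linarith) (by linarith)
        (by linarith) (by linarith)).deriv
    rw [hev.deriv_eq]
    have L5 : HasDerivAt (fun t : ℝ => Real.log (c + t - y)) (c + x - y)⁻¹ x := by
      simpa [Function.comp_def] using (Real.hasDerivAt_log ncxy).comp x (((hasDerivAt_id x).const_add c).sub_const y)
    have L6 : HasDerivAt (fun t : ℝ => Real.log (t - y)) (x - y)⁻¹ x := by
      simpa [Function.comp_def] using (Real.hasDerivAt_log nxy).comp x ((hasDerivAt_id x).sub_const y)
    have L7 : HasDerivAt (fun t : ℝ => Real.log (a + b + y - t)) (-(a + b + y - x)⁻¹) x := by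
      simpa [Function.comp_def] using (Real.hasDerivAt_log nabyx).comp x ((hasDerivAt_id x).const_sub (a + b + y))
    have L8 : HasDerivAt (fun t : ℝ => Real.log (b + y - t)) (-(b + y - x)⁻¹) x := by
      simpa [Function.comp_def] using (Real.hasDerivAt_log nbyx).comp x ((hasDerivAt_id x).const_sub (b + y))
    erw [(((L5.const_sub (-Real.log (2 - y) + Real.log (1 - y) + Real.log (1 + y)
        - Real.log y)).add L6).add L7 |>.sub L8).deriv]
    rw [hT]
    have B' : (c + x - y)⁻¹ - (x - y)⁻¹ = -(c / ((c + x - y) * (x - y))) :=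
      inv_sub_inv'' _ _ _ ncxy nxy (by ring)
    have C' : (a + b + y - x)⁻¹ - (b + y - x)⁻¹
        = -(a / ((a + b + y - x) * (b + y - x))) :=
      inv_sub_inv'' _ _ _ nabyx nbyx (by ring)
    rw [show (a + b + y - x) * (b + y - x) = (a + b - x + y) * (b - x + y) by ring] at C'
    linarith [B', C']
  -- entry (1,1)
  have e22 : deriv (fun t => deriv (fun s => gFn a b c ψ x s) t) y = -S - T := by
    have hev : (fun t => deriv (fun s => gFn a b c ψ x s) t) =ᶠ[nhds y]
        (fun t => -Real.log (2 - t) + Real.log (1 - t) + Real.log (1 + t) - Real.log t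
          - Real.log (c + x - t) + Real.log (x - t) + Real.log (a + b + t - x)
          - Real.log (b + t - x)) := by
      filter_upwards [eventually_lt_nhds (show y < 2 by linarith),
        eventually_lt_nhds hy1, eventually_gt_nhds (show (-1:ℝ) < y by linarith),
        eventually_gt_nhds hy0, eventually_lt_nhds (show y < c + x by linarith),
        eventually_lt_nhds hyx, eventually_gt_nhds (show x - a - b < y by linarith),
        eventually_gt_nhds hbxy] with t h1 h2 h3 h4 h5 h6 h7 h8
      exact (gy_hasDeriv a b c ψ x t (by linarith) (by linarith) (by linarith)
        (by linarith) (by linarith) (by linarith) (by linarith) (by linarith)).deriv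
    rw [hev.deriv_eq]
    have M1 : HasDerivAt (fun t : ℝ => Real.log (2 - t)) (-(2 - y)⁻¹) y := by
      simpa [Function.comp_def] using (Real.hasDerivAt_log n2y).comp y ((hasDerivAt_id y).const_sub 2)
    have M2 : HasDerivAt (fun t : ℝ => Real.log (1 - t)) (-(1 - y)⁻¹) y := by
      simpa [Function.comp_def] using (Real.hasDerivAt_log n1y).comp y ((hasDerivAt_id y).const_sub 1)
    have M3 : HasDerivAt (fun t : ℝ => Real.log (1 + t)) (1 + y)⁻¹ y := by
      simpa [Function.comp_def] using (Real.hasDerivAt_log n1py).comp y ((hasDerivAt_id y).const_add 1)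
    have M4 : HasDerivAt (fun t : ℝ => Real.log t) y⁻¹ y := Real.hasDerivAt_log ny
    have M5 : HasDerivAt (fun t : ℝ => Real.log (c + x - t)) (-(c + x - y)⁻¹) y := by
      simpa [Function.comp_def] using (Real.hasDerivAt_log ncxy).comp y ((hasDerivAt_id y).const_sub (c + x))
    have M6 : HasDerivAt (fun t : ℝ => Real.log (x - t)) (-(x - y)⁻¹) y := by
      simpa [Function.comp_def] using (Real.hasDerivAt_log nxy).comp y ((hasDerivAt_id y).const_sub x)
    have M7 : HasDerivAt (fun t : ℝ => Real.log (a + b + t - x)) (a + b + y - x)⁻¹ y := by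
      simpa [Function.comp_def] using (Real.hasDerivAt_log nabyx).comp y
        (((hasDerivAt_id y).const_add (a + b)).sub_const x)
    have M8 : HasDerivAt (fun t : ℝ => Real.log (b + t - x)) (b + y - x)⁻¹ y := by
      simpa [Function.comp_def] using (Real.hasDerivAt_log nbyx).comp y
        (((hasDerivAt_id y).const_add b).sub_const x)
    erw [((((((M1.neg.add M2).add M3).sub M4).sub M5).add M6).add M7 |>.sub M8).deriv]
    rw [hS, hT]
    have B' : (c + x - y)⁻¹ - (x - y)⁻¹ = -(c / ((c + x - y) * (x - y))) :=
      inv_sub_inv'' _ _ _ ncxy nxy (by ring)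
    have C' : (a + b + y - x)⁻¹ - (b + y - x)⁻¹
        = -(a / ((a + b + y - x) * (b + y - x))) :=
      inv_sub_inv'' _ _ _ nabyx nbyx (by ring)
    rw [show (a + b + y - x) * (b + y - x) = (a + b - x + y) * (b - x + y) by ring] at C'
    have P' : (2 - y)⁻¹ - (1 - y)⁻¹ = -(1 / ((2 - y) * (1 - y))) :=
      inv_sub_inv'' _ _ _ n2y n1y (by ring)
    have Q' : (1 + y)⁻¹ - y⁻¹ = -(1 / ((1 + y) * y)) :=
      inv_sub_inv'' _ _ _ n1py ny (by ring)
    rw [show (1 + y) * y = y * (1 + y) by ring] at Q'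
    linarith [B', C', P', Q']
  refine ⟨?_, ?_, ?_⟩
  · unfold hessG
    rw [e11, e12, e21, e22]
  · have h1 : (2 - y) * (1 - y) ≤ 2 := by nlinarith
    have h2 : y * (1 + y) ≤ 2 := by nlinarith
    have p1 : (0:ℝ) < (2 - y) * (1 - y) := mul_pos p2y p1y
    have p2 : (0:ℝ) < y * (1 + y) := mul_pos hy0 p1py
    have q1 : (1:ℝ)/2 ≤ 1 / ((2 - y) * (1 - y)) := one_div_le_one_div_of_le p1 h1
    have q2 : (1:ℝ)/2 ≤ 1 / (y * (1 + y)) := one_div_le_one_div_of_le p2 h2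
    rw [hS]; linarith
  · rw [hT]
    have pd1 : (0:ℝ) < (a + b - x + y) * (b - x + y) := by
      apply mul_pos <;> linarith
    have pd2 : (0:ℝ) < (c + x - y) * (x - y) := mul_pos pcxy pxy
    exact add_nonneg (div_nonneg ha.le pd1.le) (div_nonneg hc.le pd2.le)
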